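/- Let g ∈ ℝ^d with ‖g‖ = 1, and let η, B, C, R be reals with η > 0, 0 < R < 1 and 0 < B < C. Let K = {(x, r) ∈ ℝ^d × ℝ^d : ⟨g, x⟩ ≥ B, ‖r‖ ≤ R, ‖x‖ ≤ C} and F(x, r) = η‖g + r‖² − 2⟨x, g + r⟩. If (x★, r★) ∈ K satisfies F(x★, r★) ≥ F(x, r) for all (x, r) ∈ K, then ⟨x★, g⟩ = B. -/

import Mathlib

open RealInnerProductSpace

set_option maxHeartbeats 1000000

/-- at any maximizer `(x★, r★)` of `F(x, r) = η‖g + r‖² − 2⟪x, g + r⟫` over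
`K = {(x, r) : ⟪g, x⟫ ≥ B, ‖r‖ ≤ R, ‖x‖ ≤ C}`, the constraint `⟪g, x⟫ ≥ B` is active:
`⟪x★, g⟫ = B`. -/
theorem maximizer_linear_constraint_active {d : ℕ}
    (g : EuclideanSpace ℝ (Fin d)) (hg : ‖g‖ = 1)
    (η B C R : ℝ) (hη : 0 < η) (hR0 : 0 < R) (hR1 : R < 1) (hB : 0 < B) (hBC : B < C)
    (K : Set (EuclideanSpace ℝ (Fin d) × EuclideanSpace ℝ (Fin d)))
    (hK : K = {p | B ≤ ⟪g, p.1⟫ ∧ ‖p.2‖ ≤ R ∧ ‖p.1‖ ≤ C})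
    (F : EuclideanSpace ℝ (Fin d) → EuclideanSpace ℝ (Fin d) → ℝ)
    (hF : ∀ x r, F x r = η * ‖g + r‖ ^ 2 - 2 * ⟪x, g + r⟫)
    (xs rs : EuclideanSpace ℝ (Fin d)) (hmem : (xs, rs) ∈ K)
    (hmax : ∀ p ∈ K, F p.1 p.2 ≤ F xs rs) :
    ⟪xs, g⟫ = B := by
  subst hK
  obtain ⟨hlin, hrR, hxC⟩ := hmem
  simp only at hlin hrR hxC
  rw [real_inner_comm]
  by_contra hne
  have hgt : B < ⟪g, xs⟫ := lt_of_le_of_ne hlin (fun h => hne h.symm)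
  obtain ⟨u, hu_def⟩ : ∃ u : EuclideanSpace ℝ (Fin d), u = g + rs := ⟨_, rfl⟩
  have hC : (0:ℝ) < C := hB.trans hBC
  -- ‖u‖ ≥ 1 - R > 0
  have hun : 1 - R ≤ ‖u‖ := by
    have h := norm_sub_norm_le g (-rs)
    simp only [sub_neg_eq_add, norm_neg, hg] at h
    rw [hu_def]; linarith
  have hun0 : (0:ℝ) < ‖u‖ := lt_of_lt_of_le (by linarith) hun
  -- ⟪g, u⟫ ≥ 1 - R > 0
  have hgu : 1 - R ≤ ⟪g, u⟫ := by
    have h1 : ⟪g, u⟫ = 1 + ⟪g, rs⟫ := by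
      rw [hu_def, inner_add_right, real_inner_self_eq_norm_sq, hg]; ring
    have h2 : |⟪g, rs⟫| ≤ ‖g‖ * ‖rs‖ := abs_real_inner_le_norm g rs
    rw [hg, one_mul] at h2
    have := (abs_le.mp h2).1
    linarith
  have hgu0 : (0:ℝ) < ⟪g, u⟫ := lt_of_lt_of_le (by linarith) hgu
  -- key: xs minimizes ⟪·, u⟫ over the feasible set for fixed rs
  have key : ∀ y : EuclideanSpace ℝ (Fin d), B ≤ ⟪g, y⟫ → ‖y‖ ≤ C →
      ⟪xs, u⟫ ≤ ⟪y, u⟫ := by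
    intro y h1 h2
    have h := hmax (y, rs) ⟨h1, hrR, h2⟩
    rw [hF, hF] at h
    simp only at h
    rw [hu_def]
    linarith
  clear hmax hF hne
  rcases lt_or_ge 0 ⟪xs, u⟫ with hpos | hnpos
  · -- scale down
    obtain ⟨G, hG⟩ : ∃ G, G = ⟪g, xs⟫ := ⟨_, rfl⟩
    have hgxs0 : (0:ℝ) < G := by rw [hG]; exact hB.trans hgt
    obtain ⟨t, ht⟩ : ∃ t : ℝ, t = (G - B) / G := ⟨_, rfl⟩
    have ht0 : 0 < t := by rw [ht]; exact div_pos (by rw [hG] at *; linarith) hgxs0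
    have hy1 : B ≤ ⟪g, (1 - t) • xs⟫ := by
      rw [real_inner_smul_right, ← hG]
      have h : (1 - t) * G = B := by rw [ht]; field_simp; ring
      linarith
    have hy2 : ‖(1 - t) • xs‖ ≤ C := by
      have ht1 : t < 1 := by
        rw [ht, div_lt_one hgxs0]; rw [hG] at *; linarith
      rw [norm_smul, Real.norm_eq_abs, abs_of_pos (by linarith)]
      nlinarith [norm_nonneg xs]
    have h := key _ hy1 hy2
    rw [real_inner_smul_left] at h
    nlinarith
  rcases lt_or_eq_of_le hxC with hxlt | hxeq
  · -- interior of norm ball: translate by -t u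
    obtain ⟨t, ht⟩ : ∃ t : ℝ, t = min ((C - ‖xs‖) / ‖u‖) ((⟪g, xs⟫ - B) / ⟪g, u⟫) := ⟨_, rfl⟩
    have ht0 : 0 < t := by
      rw [ht]; exact lt_min (div_pos (by linarith) hun0) (div_pos (by linarith) hgu0)
    have hy1 : B ≤ ⟪g, xs - t • u⟫ := by
      rw [inner_sub_right, real_inner_smul_right]
      have h2 : t ≤ (⟪g, xs⟫ - B) / ⟪g, u⟫ := by rw [ht]; exact min_le_right _ _
      rw [le_div_iff₀ hgu0] at h2
      linarith
    have hy2 : ‖xs - t • u‖ ≤ C := by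
      have h1 : t ≤ (C - ‖xs‖) / ‖u‖ := by rw [ht]; exact min_le_left _ _
      rw [le_div_iff₀ hun0] at h1
      calc ‖xs - t • u‖ ≤ ‖xs‖ + ‖t • u‖ := norm_sub_le _ _
        _ = ‖xs‖ + t * ‖u‖ := by
            rw [norm_smul, Real.norm_eq_abs, abs_of_pos ht0]
        _ ≤ C := by linarith
    have h := key _ hy1 hy2
    rw [inner_sub_left, real_inner_smul_left, real_inner_self_eq_norm_sq] at h
    nlinarith [mul_pos ht0 (mul_pos hun0 hun0)]
  · -- ‖xs‖ = C
    obtain ⟨a, ha_def⟩ : ∃ a : ℝ, a = -⟪xs, u⟫ := ⟨_, rfl⟩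
    have ha0 : 0 ≤ a := by rw [ha_def]; linarith
    have haCS : a ≤ C * ‖u‖ := by
      have h := abs_real_inner_le_norm xs u
      rw [hxeq] at h
      have := (abs_le.mp h).1
      rw [ha_def]; linarith
    rcases lt_or_eq_of_le haCS with haLt | haEq
    · -- strict Cauchy-Schwarz case: tangent perturbation
      have hnum : 0 < ‖u‖ ^ 2 - a ^ 2 / C ^ 2 := by
        rw [sub_pos, div_lt_iff₀ (by positivity)]
        nlinarith
      obtain ⟨δ, hδ_def⟩ : ∃ δ : ℝ, δ = (‖u‖ ^ 2 - a ^ 2 / C ^ 2) / (2 * (a + 1)) := ⟨_, rfl⟩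
      have hδ0 : 0 < δ := by rw [hδ_def]; exact div_pos hnum (by linarith)
      obtain ⟨α, hα_def⟩ : ∃ α : ℝ, α = a / C ^ 2 + δ := ⟨_, rfl⟩
      obtain ⟨v, hv_def⟩ : ∃ v : EuclideanSpace ℝ (Fin d), v = -u - α • xs := ⟨_, rfl⟩
      have hαC2 : α * C ^ 2 = a + δ * C ^ 2 := by
        rw [hα_def]; field_simp
      have hxv : ⟪xs, v⟫ = -δ * C ^ 2 := by
        rw [hv_def, inner_sub_right, inner_neg_right, real_inner_smul_right,
          real_inner_self_eq_norm_sq, hxeq]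
        linarith [ha_def, hαC2]
      have hvu : ⟪v, u⟫ ≤ -(‖u‖ ^ 2 - a ^ 2 / C ^ 2) / 2 := by
        have h1 : ⟪v, u⟫ = -‖u‖ ^ 2 + α * a := by
          rw [hv_def, inner_sub_left, inner_neg_left, real_inner_smul_left,
            real_inner_self_eq_norm_sq, ha_def]
          ring
        have h2 : δ * a ≤ (‖u‖ ^ 2 - a ^ 2 / C ^ 2) / 2 := by
          rw [hδ_def, div_mul_eq_mul_div, div_le_div_iff₀ (by linarith) (by norm_num)]
          nlinarith
        have h3 : α * a = a ^ 2 / C ^ 2 + δ * a := by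
          rw [hα_def]; field_simp
        rw [h1, h3]
        linarith
      have hvu0 : ⟪v, u⟫ < 0 := lt_of_le_of_lt hvu (by linarith)
      have hv0 : (0:ℝ) < ‖v‖ := by
        rcases eq_or_ne v 0 with h | h
        · rw [h, inner_zero_right] at hxv
          nlinarith [mul_pos hδ0 (pow_pos hC 2)]
        · exact norm_pos_iff.mpr h
      obtain ⟨t, ht⟩ : ∃ t : ℝ,
          t = min (2 * δ * C ^ 2 / ‖v‖ ^ 2) ((⟪g, xs⟫ - B) / ‖v‖) := ⟨_, rfl⟩
      have ht0 : 0 < t := by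
        rw [ht]; exact lt_min (by positivity) (div_pos (by linarith) hv0)
      have hy1 : B ≤ ⟪g, xs + t • v⟫ := by
        rw [inner_add_right, real_inner_smul_right]
        have h2 : t ≤ (⟪g, xs⟫ - B) / ‖v‖ := by rw [ht]; exact min_le_right _ _
        rw [le_div_iff₀ hv0] at h2
        have h3 : -(‖g‖ * ‖v‖) ≤ ⟪g, v⟫ := neg_le_of_abs_le (abs_real_inner_le_norm g v)
        rw [hg, one_mul] at h3
        nlinarith
      have hy2 : ‖xs + t • v‖ ≤ C := by
        have h1 : t ≤ 2 * δ * C ^ 2 / ‖v‖ ^ 2 := by rw [ht]; exact min_le_left _ _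
        rw [le_div_iff₀ (by positivity)] at h1
        have hsq : ‖xs + t • v‖ ^ 2 = ‖xs‖ ^ 2 + 2 * t * ⟪xs, v⟫ + t ^ 2 * ‖v‖ ^ 2 := by
          rw [norm_add_sq_real, real_inner_smul_right, norm_smul, Real.norm_eq_abs,
            abs_of_pos ht0, mul_pow]
          ring
        have h2 : ‖xs + t • v‖ ^ 2 ≤ C ^ 2 := by
          rw [hsq, hxeq, hxv]
          nlinarith
        nlinarith [norm_nonneg (xs + t • v)]
      have h := key _ hy1 hy2
      rw [inner_add_left, real_inner_smul_left] at h
      nlinarith [mul_pos ht0 (neg_pos.mpr hvu0)]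
    · -- equality case: xs antiparallel to u, contradicts ⟪g, xs⟫ ≥ B > 0
      have heq : ⟪xs, -u⟫ = ‖xs‖ * ‖-u‖ := by
        rw [inner_neg_right, norm_neg, hxeq]
        rw [ha_def] at haEq
        linarith
      have hpar := (inner_eq_norm_mul_iff_real).mp heq
      rw [norm_neg, hxeq] at hpar
      -- ‖u‖ • xs = C • (-u)
      have h : ‖u‖ * ⟪g, xs⟫ = -(C * ⟪g, u⟫) := by
        have h2 := congrArg (fun z => ⟪g, z⟫) hpar
        simp only [real_inner_smul_right, inner_neg_right] at h2
        linarith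
      nlinarith
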